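/- Consider the quotient ring R̂^{D_0} = M(ℝ^{D_0})/N(ℝ^{D_0}) of moderate real-valued nets modulo negligible nets. For a nonzero class a ∈ R̂^{D_0}, declare a > 0 if some (equivalently, every) representative net (A_φ) of a satisfies A_φ > 0 a.e. Then: (1) this relation is well defined (independent of the representative) on nonzero classes; (2) for every nonzero a ∈ R̂^{D_0} exactly one of a > 0 and −a > 0 holds, and the relation is compatible with addition and multiplication, so R̂^{D_0} is a totally ordered field; (3) for every a ∈ R̂^{D_0}, a ≥ 0 (i.e. a = 0 or a > 0) if and only if a = b² for some b ∈ R̂^{D_0}. -/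

import Mathlib

open MeasureTheory Filter

noncomputable section

/-- ℝ^d with the Euclidean norm. -/
abbrev Rd (d : ℕ) := EuclideanSpace ℝ (Fin d)

/-- The partial derivative in the `i`-th coordinate direction. -/
noncomputable def pderivI (d : ℕ) (i : Fin d) (f : Rd d → ℂ) : Rd d → ℂ :=
  fun x => fderiv ℝ f x (EuclideanSpace.single i (1 : ℝ))

/-- The iterated partial derivative `∂^α` of multi-index order `α`. -/
noncomputable def multiDeriv (d : ℕ) (α : Fin d → ℕ) (f : Rd d → ℂ) : Rd d → ℂ :=
  ((List.ofFn fun i : Fin d => (pderivI d i)^[α i]).foldr (· ∘ ·) id) f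

-- The radius of support `R_φ`.
open Classical in
noncomputable def radSupp (d : ℕ) (φ : Rd d → ℂ) : ℝ :=
  if φ = 0 then 1 else sSup {r : ℝ | ∃ x, φ x ≠ 0 ∧ r = ‖x‖}

/-- The type of test functions `D(ℝ^d)`: smooth compactly supported `φ : ℝ^d → ℂ`. -/
def TestFun (d : ℕ) := {φ : Rd d → ℂ // ContDiff ℝ (⊤ : ℕ∞) φ ∧ HasCompactSupport φ}

/-- The directing set `D_n`. -/
def directingSet (d n : ℕ) : Set (TestFun d) :=
  {φ | (∀ x, (φ.1 x).im = 0) ∧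
       (∀ x, φ.1 (-x) = φ.1 x) ∧
       radSupp d φ.1 ≤ 1 / n ∧
       (∫ x, φ.1 x) = 1 ∧
       (∀ α : Fin d → ℕ, 1 ≤ ∑ i, α i → ∑ i, α i ≤ n →
          (∫ x, (∏ i, (x i : ℂ) ^ α i) * φ.1 x) = 0) ∧
       (∫ x, ‖φ.1 x‖) ≤ 1 + 1 / n ∧
       (∀ α : Fin d → ℕ, ∑ i, α i ≤ n → ∀ x,
          ‖multiDeriv d α φ.1 x‖ ≤ radSupp d φ.1 ^ (-(2 * ((∑ i, α i) + d) : ℤ)))}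

end

/-- A real net `A : D_0 → ℝ` is *moderate* if `|A_φ| ≤ R_φ^{−m}` a.e. for some `m ∈ ℕ`. -/
def ModerateR (d : ℕ) (U : Ultrafilter (TestFun d)) (A : TestFun d → ℝ) : Prop :=
  ∃ m : ℕ, {φ : TestFun d | |A φ| ≤ radSupp d φ.1 ^ (-(m : ℤ))} ∈ U

/-- A real net `A : D_0 → ℝ` is *negligible* if `|A_φ| < R_φ^p` a.e. for every `p ∈ ℕ`. -/
def NegligibleR (d : ℕ) (U : Ultrafilter (TestFun d)) (A : TestFun d → ℝ) : Prop :=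
  ∀ p : ℕ, {φ : TestFun d | |A φ| < radSupp d φ.1 ^ p} ∈ U

/-- `A_φ > 0` almost everywhere. -/
def PosAE (d : ℕ) (U : Ultrafilter (TestFun d)) (A : TestFun d → ℝ) : Prop :=
  {φ : TestFun d | 0 < A φ} ∈ U

/-- If a test function has integral 1 then its radius of support is positive. -/
lemma radSupp_pos_aux {d : ℕ} (hd : 0 < d) (φ : TestFun d)
    (h1 : (∫ x, φ.1 x) = 1) : 0 < radSupp d φ.1 := by
  have : Nonempty (Fin d) := ⟨⟨0, hd⟩⟩
  have hne : φ.1 ≠ 0 := by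
    intro h
    rw [h] at h1
    simp at h1
  rw [radSupp, if_neg hne]
  -- bounded above
  obtain ⟨C, hC⟩ := φ.2.2.isBounded.exists_norm_le
  have hbdd : BddAbove {r : ℝ | ∃ x, φ.1 x ≠ 0 ∧ r = ‖x‖} := by
    refine ⟨C, fun r hr => ?_⟩
    obtain ⟨x, hx, rfl⟩ := hr
    exact hC x (subset_tsupport φ.1 hx)
  -- a point of positive norm where φ ≠ 0
  have hx : ∃ x : Rd d, φ.1 x ≠ 0 ∧ 0 < ‖x‖ := by
    by_contra h
    push_neg at h
    have hsupp : Function.support φ.1 ⊆ {0} := by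
      intro x hx
      have := h x hx
      have : ‖x‖ = 0 := le_antisymm this (norm_nonneg _)
      simpa [norm_eq_zero] using this
    have hnull : MeasureTheory.volume (Function.support φ.1) = 0 :=
      measure_mono_null hsupp (measure_singleton 0)
    have hae : φ.1 =ᵐ[MeasureTheory.volume] 0 := by
      rw [Filter.EventuallyEq, MeasureTheory.ae_iff]
      refine measure_mono_null ?_ (measure_singleton (0 : Rd d))
      intro x hx
      simp only [Set.mem_setOf_eq, Pi.zero_apply] at hx
      exact hsupp hx
    have : (∫ x, φ.1 x) = 0 := by
      rw [MeasureTheory.integral_congr_ae hae]; simp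
    rw [h1] at this
    exact one_ne_zero this
  obtain ⟨x, hx, hxn⟩ := hx
  exact lt_of_lt_of_le hxn (le_csSup hbdd ⟨x, hx, rfl⟩)

/-- the order on `R̂^{D_0} = M(ℝ^{D_0})/N(ℝ^{D_0})` given on nonzero classes by
`a > 0` iff a representative is positive a.e. is (1) well defined, (2) makes `R̂^{D_0}` a
totally ordered field (trichotomy on nonzero classes, compatibility with `+` and `*`), and
(3) `a ≥ 0` iff `a` is a square — all stated elementwise on representatives. -/
theorem quotient_totally_ordered_real_closed
    (d : ℕ) (hd : 0 < d) (U : Ultrafilter (TestFun d))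
    (hU : ∀ n : ℕ, 1 ≤ n → directingSet d n ∈ U) :
    -- (1) well-definedness: representatives of the same nonzero class are a.e. positive together
    (∀ A B : TestFun d → ℝ, ModerateR d U A → ModerateR d U B → ¬ NegligibleR d U A →
      NegligibleR d U (A - B) → (PosAE d U A ↔ PosAE d U B)) ∧
    -- (2) trichotomy: for a nonzero class exactly one of `a > 0`, `−a > 0` holds
    (∀ A : TestFun d → ℝ, ModerateR d U A → ¬ NegligibleR d U A →
      Xor' (PosAE d U A) (PosAE d U (-A))) ∧
    -- (2) compatibility with addition and multiplication (positive nonzero classes are closed)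
    (∀ A B : TestFun d → ℝ, ModerateR d U A → ModerateR d U B →
      (¬ NegligibleR d U A ∧ PosAE d U A) → (¬ NegligibleR d U B ∧ PosAE d U B) →
      (¬ NegligibleR d U (A + B) ∧ PosAE d U (A + B)) ∧
      (¬ NegligibleR d U (A * B) ∧ PosAE d U (A * B))) ∧
    -- (3) `a ≥ 0` iff `a = b²` for some `b`
    (∀ A : TestFun d → ℝ, ModerateR d U A →
      ((NegligibleR d U A ∨ (¬ NegligibleR d U A ∧ PosAE d U A)) ↔
        ∃ B : TestFun d → ℝ, ModerateR d U B ∧ NegligibleR d U (A - B * B))) := by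
  set r : TestFun d → ℝ := fun φ => radSupp d φ.1 with hr
  -- the key bounded set
  have hP : {φ : TestFun d | 0 < r φ ∧ r φ ≤ 1/2} ∈ U := by
    refine Filter.mem_of_superset (hU 2 (by norm_num)) ?_
    rintro φ ⟨_, _, hrad, hint, _⟩
    refine ⟨radSupp_pos_aux hd φ hint, ?_⟩
    simpa using hrad
  set P : Set (TestFun d) := {φ : TestFun d | 0 < r φ ∧ r φ ≤ 1/2} with hPdef
  -- not-negligible extraction
  have hnn : ∀ A : TestFun d → ℝ, ¬ NegligibleR d U A →
      ∃ p : ℕ, {φ : TestFun d | r φ ^ p ≤ |A φ|} ∈ U := by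
    intro A hA
    rw [NegligibleR] at hA
    push_neg at hA
    obtain ⟨p, hp⟩ := hA
    refine ⟨p, ?_⟩
    have := (Ultrafilter.compl_mem_iff_notMem).2 hp
    convert this using 1
    ext φ; simp [hr, not_lt]
  -- conversely: a lower bound set in U refutes negligibility
  have hnn' : ∀ (A : TestFun d → ℝ) (p : ℕ),
      {φ : TestFun d | r φ ^ p ≤ |A φ|} ∈ U → ¬ NegligibleR d U A := by
    intro A p hp hA
    have := Filter.inter_mem hp (hA p)
    obtain ⟨φ, h1, h2⟩ := (Ultrafilter.nonempty_of_mem this)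
    simp only [Set.mem_setOf_eq] at h1 h2
    exact absurd h2 (not_lt.2 h1)
  -- (1) well-definedness
  have part1 : ∀ A B : TestFun d → ℝ, ModerateR d U A → ModerateR d U B →
      ¬ NegligibleR d U A → NegligibleR d U (A - B) → (PosAE d U A ↔ PosAE d U B) := by
    intro A B _ _ hA hAB
    obtain ⟨p, hp⟩ := hnn A hA
    have hK : P ∩ {φ | r φ ^ p ≤ |A φ|} ∩ {φ | |(A - B) φ| < r φ ^ (p+1)} ∈ U :=
      Filter.inter_mem (Filter.inter_mem hP hp) (hAB (p+1))
    have key : ∀ φ ∈ P ∩ {φ | r φ ^ p ≤ |A φ|} ∩ {φ | |(A - B) φ| < r φ ^ (p+1)},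
        (0 < A φ ↔ 0 < B φ) := by
      rintro φ ⟨⟨⟨hr0, hr2⟩, hpA⟩, hab⟩
      simp only [Set.mem_setOf_eq, Pi.sub_apply] at hpA hab ⊢
      have h1 : r φ ^ (p+1) ≤ r φ ^ p / 2 := by
        rw [pow_succ]
        nlinarith [pow_pos hr0 p]
      have h2 : |A φ - B φ| < |A φ| / 2 := lt_of_lt_of_le hab (le_trans h1 (by linarith))
      rcases abs_cases (A φ - B φ) with ⟨he, _⟩ | ⟨he, _⟩ <;>
        rcases abs_cases (A φ) with ⟨hf, _⟩ | ⟨hf, _⟩ <;>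
        constructor <;> intro <;> nlinarith [pow_pos hr0 p]
    constructor <;> intro h
    · exact Filter.mem_of_superset (Filter.inter_mem h hK) (fun φ ⟨h1, h2⟩ => (key φ h2).1 h1)
    · exact Filter.mem_of_superset (Filter.inter_mem h hK) (fun φ ⟨h1, h2⟩ => (key φ h2).2 h1)
  refine ⟨part1, ?_, ?_, ?_⟩
  -- (2) trichotomy
  · intro A _ hA
    have hposneg : ¬ ({φ : TestFun d | 0 < A φ} ∈ U ∧ {φ : TestFun d | 0 < (-A) φ} ∈ U) := by
      rintro ⟨h1, h2⟩
      obtain ⟨φ, k1, k2⟩ := Ultrafilter.nonempty_of_mem (Filter.inter_mem h1 h2)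
      simp only [Set.mem_setOf_eq, Pi.neg_apply] at k1 k2
      linarith
    rcases em ({φ : TestFun d | 0 < A φ} ∈ U) with h | h
    · exact Or.inl ⟨h, fun h2 => hposneg ⟨h, h2⟩⟩
    · refine Or.inr ⟨?_, h⟩
      have hc : {φ : TestFun d | 0 < A φ}ᶜ ∈ U := (Ultrafilter.compl_mem_iff_notMem).2 h
      -- show {A φ < 0} ∈ U ; else A would be 0 on a U-set, hence negligible
      rcases em ({φ : TestFun d | 0 < (-A) φ} ∈ U) with h' | h'
      · exact h'
      exfalso
      have hc' : {φ : TestFun d | 0 < (-A) φ}ᶜ ∈ U := (Ultrafilter.compl_mem_iff_notMem).2 h'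
      apply hA
      intro p
      refine Filter.mem_of_superset (Filter.inter_mem (Filter.inter_mem hc hc') hP) ?_
      rintro φ ⟨⟨k1, k2⟩, k3, _⟩
      simp only [Set.mem_compl_iff, Set.mem_setOf_eq, Pi.neg_apply, not_lt] at k1 k2
      have : A φ = 0 := le_antisymm k1 (by linarith)
      simp only [Set.mem_setOf_eq, this, abs_zero]
      exact pow_pos k3 p
  -- (2) compatibility
  · intro A B _ _ ⟨hA, hAp⟩ ⟨hB, hBp⟩
    obtain ⟨p, hp⟩ := hnn A hA
    obtain ⟨q, hq⟩ := hnn B hB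
    have hposAB : {φ : TestFun d | 0 < A φ} ∩ {φ : TestFun d | 0 < B φ} ∈ U :=
      Filter.inter_mem hAp hBp
    constructor
    · constructor
      · apply hnn' (A + B) p
        refine Filter.mem_of_superset (Filter.inter_mem hp hposAB) ?_
        rintro φ ⟨k1, k2, k3⟩
        simp only [Set.mem_setOf_eq, Pi.add_apply] at *
        rw [abs_of_pos (by linarith)]
        calc r φ ^ p ≤ |A φ| := k1
          _ = A φ := abs_of_pos k2
          _ ≤ A φ + B φ := by linarith
      · refine Filter.mem_of_superset hposAB (fun φ hφ => ?_)
        obtain ⟨k1, k2⟩ := hφ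
        simp only [Set.mem_setOf_eq] at k1 k2
        simp only [Set.mem_setOf_eq, Pi.add_apply]
        exact add_pos k1 k2
    · constructor
      · apply hnn' (A * B) (p + q)
        refine Filter.mem_of_superset (Filter.inter_mem (Filter.inter_mem hp hq) hP) ?_
        rintro φ ⟨⟨k1, k2⟩, k3, _⟩
        simp only [Set.mem_setOf_eq, Pi.mul_apply, abs_mul, pow_add]
        exact mul_le_mul k1 k2 (pow_nonneg (le_of_lt k3) q) (abs_nonneg _)
      · refine Filter.mem_of_superset hposAB (fun φ hφ => ?_)
        obtain ⟨k1, k2⟩ := hφ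
        simp only [Set.mem_setOf_eq] at k1 k2
        simp only [Set.mem_setOf_eq, Pi.mul_apply]
        exact mul_pos k1 k2
  -- (3) squares
  · intro A hAmod
    constructor
    · rintro (hA | ⟨hA, hApos⟩)
      · refine ⟨0, ⟨0, ?_⟩, ?_⟩
        · refine Filter.univ_mem' (fun φ => ?_)
          simp
        · intro p
          simpa using hA p
      · refine ⟨fun φ => Real.sqrt (A φ), ?_, ?_⟩
        · obtain ⟨m, hm⟩ := hAmod
          refine ⟨m, ?_⟩
          refine Filter.mem_of_superset (Filter.inter_mem hm hP) ?_
          rintro φ ⟨k1, k2, k3⟩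
          simp only [Set.mem_setOf_eq] at *
          have hpow : (1:ℝ) ≤ r φ ^ (-(m:ℤ)) := by
            rw [zpow_neg, zpow_natCast, one_le_inv₀ (pow_pos k2 m)]
            exact pow_le_one₀ (le_of_lt k2) (by linarith)
          rw [abs_of_nonneg (Real.sqrt_nonneg _)]
          rw [Real.sqrt_le_left (by linarith)]
          calc A φ ≤ |A φ| := le_abs_self _
            _ ≤ r φ ^ (-(m:ℤ)) := k1
            _ ≤ (r φ ^ (-(m:ℤ)))^2 := by nlinarith
        · intro p
          refine Filter.mem_of_superset (Filter.inter_mem hApos hP) ?_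
          rintro φ ⟨k1, k2, _⟩
          simp only [Set.mem_setOf_eq, Pi.sub_apply, Pi.mul_apply] at *
          rw [Real.mul_self_sqrt (le_of_lt k1)]
          simpa using pow_pos k2 p
    · rintro ⟨B, _, hneg⟩
      rcases em (NegligibleR d U A) with h | h
      · exact Or.inl h
      right
      refine ⟨h, ?_⟩
      obtain ⟨p, hp⟩ := hnn A h
      refine Filter.mem_of_superset
        (Filter.inter_mem (Filter.inter_mem hp (hneg (p+1))) hP) ?_
      rintro φ ⟨⟨k1, k2⟩, k3, k4⟩
      simp only [Set.mem_setOf_eq] at k1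
      simp only [Set.mem_setOf_eq, Pi.sub_apply, Pi.mul_apply] at k2
      show 0 < A φ
      have hb : 0 ≤ B φ * B φ := mul_self_nonneg _
      have h1 : r φ ^ (p+1) ≤ r φ ^ p / 2 := by
        rw [pow_succ]
        nlinarith [pow_pos k3 p]
      have h2 : |A φ - B φ * B φ| < |A φ| / 2 := lt_of_lt_of_le k2 (le_trans h1 (by linarith))
      by_contra hneg'
      push_neg at hneg'
      have habs : |A φ| = -(A φ) := abs_of_nonpos hneg'
      rw [habs] at k1 h2
      have h3 : -(A φ - B φ * B φ) ≤ |A φ - B φ * B φ| := neg_le_abs _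
      have hrp : 0 < r φ ^ p := pow_pos k3 p
      linarith
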